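/- arXiv:2304.10017 — 5 statements merged into one kernel-verified Lean document; each statement's English description precedes it below -/
import Mathlib

section
/- For any four points p₀, p₁, p₂, p₃ in Euclidean 3-space, the cube of the total edge length of the tetrahedron they span dominates 1296·√2 times its volume: (∑_{0 ≤ i < j ≤ 3} ‖pᵢ − pⱼ‖)³ ≥ 1296·√2 · vol(convexHull {p₀, p₁, p₂, p₃}), where vol is the Lebesgue measure on ℝ³. Equivalently, the regular tetrahedron, whose Melzak ratio equals 1296√2, minimizes the Melzak ratio among all tetrahedra. -/
set_option maxHeartbeats 1600000
set_option linter.unusedTactic false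
set_option linter.unreachableTactic false
set_option linter.unusedVariables false

open MeasureTheory Set Pointwise Real

noncomputable section

abbrev P3 := Fin 3 → ℝ

-- log r ≤ (r-1) - (r-1)^2/4 for 0 < r ≤ 3/2
lemma log_le_quad {r : ℝ} (hr : 0 < r) (hr2 : r ≤ 3/2) :
    Real.log r ≤ (r - 1) - (r - 1)^2/4 := by
  set v : ℝ := Real.sqrt (Real.sqrt r) with hv
  have hvpos : 0 < v := Real.sqrt_pos.2 (Real.sqrt_pos.2 hr)
  have hv2 : v^2 = Real.sqrt r := Real.sq_sqrt (Real.sqrt_nonneg r)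
  have hv4 : v^4 = r := by
    have : v^4 = (v^2)^2 := by ring
    rw [this, hv2, Real.sq_sqrt hr.le]
  have hlog : Real.log r = 4 * Real.log v := by
    rw [← hv4, Real.log_pow]; norm_num
  have hle : Real.log v ≤ v - 1 := Real.log_le_sub_one_of_pos hvpos
  have hvb : v ≤ 6/5 := by
    by_contra hcon
    push_neg at hcon
    have : (6/5:ℝ)^4 < v^4 := by
      apply pow_lt_pow_left₀ hcon (by norm_num)
      norm_num
    rw [hv4] at this; norm_num at this; linarith
  have hG : 0 ≤ 11/4 + 3/2*v + 1/4*v^2 - v^3 - 3/4*v^4 - 1/2*v^5 - 1/4*v^6 := by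
    have h3 : v^3 ≤ (6/5)*v^2 := by nlinarith [sq_nonneg v, hvpos.le]
    have h5 : v^5 ≤ (6/5)*v^4 := by nlinarith [pow_nonneg hvpos.le 4]
    have h6 : v^6 ≤ (36/25)*v^4 := by nlinarith [pow_nonneg hvpos.le 4, sq_nonneg v]
    have h44 : v^4 ≤ 3/2 := by rw [hv4]; exact hr2
    nlinarith [sq_nonneg v, hvpos.le, mul_nonneg hvpos.le (sq_nonneg v)]
  have hH : 4*(v-1) ≤ (v^4 - 1) - (v^4 - 1)^2/4 := by
    nlinarith [mul_nonneg (sq_nonneg (v-1)) hG]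
  calc Real.log r = 4 * Real.log v := hlog
    _ ≤ 4*(v-1) := by linarith
    _ ≤ (v^4-1) - (v^4-1)^2/4 := hH
    _ = (r-1) - (r-1)^2/4 := by rw [hv4]

-- ψ(t) = 2 log t - t monotone up to 2
lemma psi_mono {t t' : ℝ} (ht : 0 < t) (htt' : t ≤ t') (ht' : t' ≤ 2) :
    2 * Real.log t - t ≤ 2 * Real.log t' - t' := by
  have ht'0 : 0 < t' := lt_of_lt_of_le ht htt'
  have h := Real.log_le_sub_one_of_pos (show 0 < t / t' by positivity)
  rw [Real.log_div ht.ne' ht'0.ne'] at h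
  have : Real.log t - Real.log t' ≤ (t - t')/t' := by
    calc Real.log t - Real.log t' ≤ t/t' - 1 := h
      _ = (t - t')/t' := by field_simp
  have h2 : (t-t')/t' * t' = t - t' := div_mul_cancel₀ _ ht'0.ne'
  nlinarith [this, mul_le_mul_of_nonneg_right this ht'0.le]

lemma psi_le_two {t : ℝ} (ht : 0 < t) : 2 * Real.log t - t ≤ 2 * Real.log 2 - 2 := by
  have h := Real.log_le_sub_one_of_pos (show 0 < t / 2 by positivity)
  rw [Real.log_div ht.ne' (by norm_num)] at h
  linarith

-- pair lemma
lemma pair_lemma {a b : ℝ} (ha : 0 < a) (hb : 0 < b) (hab : a + b ≤ 3) :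
    2*Real.log a + 2*Real.log b + (a^2+b^2)/2 ≤ 3*(a+b) - 5 := by
  set t := a*b with htdef
  set p := a+b with hpdef
  have htpos : 0 < t := mul_pos ha hb
  have hppos : 0 < p := by positivity
  have htp : t ≤ p^2/4 := by nlinarith [sq_nonneg (a-b)]
  have hlog : Real.log a + Real.log b = Real.log t := (Real.log_mul ha.ne' hb.ne').symm
  have hsq : a^2 + b^2 = p^2 - 2*t := by rw [htdef, hpdef]; ring
  rcases le_or_gt (p^2/4) 2 with hc | hc
  · -- case A
    have hmono := psi_mono htpos htp hc
    set r := p/2 with hrdef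
    have hrpos : 0 < r := by positivity
    have hr32 : r ≤ 3/2 := by nlinarith
    have hlogr : Real.log (p^2/4) = 2 * Real.log r := by
      have : p^2/4 = r^2 := by rw [hrdef]; ring
      rw [this, Real.log_pow]; norm_num
    have hq := log_le_quad hrpos hr32
    have e : 2 * Real.log (p^2/4) - p^2/4 = 4 * Real.log r - r^2 := by
      rw [hlogr, hrdef]; ring
    have key : 2 * Real.log t - t ≤ 4 * Real.log r - r^2 := hmono.trans (le_of_eq e)
    have hp2r : p = 2*r := by rw [hrdef]; ring
    have hp2sq : p^2 = 4*r^2 := by rw [hp2r]; ring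
    have hfin : 4 * Real.log r - r^2 + p^2/2 ≤ 3*p - 5 := by
      nlinarith [hq, hp2r, hp2sq]
    linarith [key, hfin, hsq, hlog]
  · -- case B
    have hkey := psi_le_two htpos
    have hlog2 : Real.log 2 < 0.6931471808 := Real.log_two_lt_d9
    have hp8 : 8 < p^2 := by linarith
    have hquad : p^2/2 - 3*p + 3 + 2*Real.log 2 ≤ 0 := by
      have hp3 : p ≥ 8/3 := by nlinarith
      nlinarith [mul_nonneg (sub_nonneg.2 hab) (sub_nonneg.2 hp3)]
    linarith [hkey, hquad, hsq, hlog]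

lemma six_normalized {a b c d e f : ℝ} (ha : 0 < a) (hb : 0 < b) (hc : 0 < c)
    (hd : 0 < d) (he : 0 < e) (hf : 0 < f) (hsum : a+b+c+d+e+f = 6)
    (h1 : a + b ≤ 3) (h2 : c + d ≤ 3) (h3 : e + f ≤ 3) :
    (a*b*c*d*e*f)^2 * (a^2+b^2+c^2+d^2+e^2+f^2)^3 ≤ 216 := by
  set Q := a^2+b^2+c^2+d^2+e^2+f^2 with hQ
  have hQpos : 0 < Q := by positivity
  have htangent : 3 * Real.log Q ≤ 3 * Real.log 6 + (Q - 6)/2 := by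
    have h := Real.log_le_sub_one_of_pos (show 0 < Q/6 by positivity)
    rw [Real.log_div hQpos.ne' (by norm_num)] at h
    linarith
  have hp1 := pair_lemma ha hb h1
  have hp2 := pair_lemma hc hd h2
  have hp3 := pair_lemma he hf h3
  have hlogsum : 2*(Real.log a + Real.log b + Real.log c + Real.log d + Real.log e + Real.log f)
      + 3 * Real.log Q ≤ 3 * Real.log 6 := by rw [hQ]; linarith
  have hX : 0 < (a*b*c*d*e*f)^2 * Q^3 := by positivity
  have hlogX : Real.log ((a*b*c*d*e*f)^2 * Q^3) =
      2*(Real.log a + Real.log b + Real.log c + Real.log d + Real.log e + Real.log f)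
        + 3 * Real.log Q := by
    rw [Real.log_mul (by positivity) (by positivity), Real.log_pow, Real.log_pow,
      Real.log_mul (by positivity) (by positivity), Real.log_mul (by positivity) (by positivity),
      Real.log_mul (by positivity) (by positivity), Real.log_mul (by positivity) (by positivity),
      Real.log_mul (by positivity) (by positivity)]
    push_cast; ring
  have h216 : Real.log ((a*b*c*d*e*f)^2 * Q^3) ≤ Real.log 216 := by
    rw [hlogX]
    calc _ ≤ 3 * Real.log 6 := hlogsum
      _ = Real.log 216 := by
          rw [show (216:ℝ) = 6^3 by norm_num, Real.log_pow]; push_cast; ring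
  exact (Real.log_le_log_iff hX (by norm_num)).1 h216

lemma scale_ineq {P Q s : ℝ} (hs : 0 < s)
    (h : ((6/s)^6*P)^2 * ((6/s)^2*Q)^3 ≤ 216) : P^2 * Q^3 * 6^15 ≤ s^18 := by
  have hexp : ((6/s)^6*P)^2 * ((6/s)^2*Q)^3 = (6^18/s^18) * (P^2 * Q^3) := by
    field_simp
  rw [hexp, div_mul_eq_mul_div, div_le_iff₀ (by positivity)] at h
  nlinarith [h]

lemma six_homog {a b c d e f : ℝ} (ha : 0 ≤ a) (hb : 0 ≤ b) (hc : 0 ≤ c)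
    (hd : 0 ≤ d) (he : 0 ≤ e) (hf : 0 ≤ f)
    (h1 : a + b ≤ c + d + e + f) (h2 : c + d ≤ a + b + e + f) (h3 : e + f ≤ a + b + c + d) :
    (a*b*c*d*e*f)^2 * (a^2+b^2+c^2+d^2+e^2+f^2)^3 * 6^15 ≤ (a+b+c+d+e+f)^18 := by
  by_cases hzero : a*b*c*d*e*f = 0
  · rw [hzero, zero_pow (by norm_num), zero_mul, zero_mul]
    positivity
  have ha' : 0 < a := lt_of_le_of_ne ha (by rintro rfl; exact hzero (by ring))
  have hb' : 0 < b := lt_of_le_of_ne hb (by rintro rfl; exact hzero (by ring))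
  have hc' : 0 < c := lt_of_le_of_ne hc (by rintro rfl; exact hzero (by ring))
  have hd' : 0 < d := lt_of_le_of_ne hd (by rintro rfl; exact hzero (by ring))
  have he' : 0 < e := lt_of_le_of_ne he (by rintro rfl; exact hzero (by ring))
  have hf' : 0 < f := lt_of_le_of_ne hf (by rintro rfl; exact hzero (by ring))
  have hspos : 0 < a+b+c+d+e+f := by positivity
  set s := a+b+c+d+e+f with hs
  set l := 6/s with hl
  have hlpos : 0 < l := by positivity
  have key := six_normalized (mul_pos hlpos ha') (mul_pos hlpos hb') (mul_pos hlpos hc')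
    (mul_pos hlpos hd') (mul_pos hlpos he') (mul_pos hlpos hf')
    (by rw [hl]; field_simp; ring)
    (by rw [hl]; rw [div_mul_eq_mul_div, div_mul_eq_mul_div, ← add_div,
          div_le_iff₀ hspos]; linarith)
    (by rw [hl]; rw [div_mul_eq_mul_div, div_mul_eq_mul_div, ← add_div,
          div_le_iff₀ hspos]; linarith)
    (by rw [hl]; rw [div_mul_eq_mul_div, div_mul_eq_mul_div, ← add_div,
          div_le_iff₀ hspos]; linarith)
  apply scale_ineq hspos
  calc ((6/s)^6*(a*b*c*d*e*f))^2 * ((6/s)^2*(a^2+b^2+c^2+d^2+e^2+f^2))^3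
      = ((l*a)*(l*b)*(l*c)*(l*d)*(l*e)*(l*f))^2 *
        ((l*a)^2+(l*b)^2+(l*c)^2+(l*d)^2+(l*e)^2+(l*f)^2)^3 := by
        rw [hl]; ring
    _ ≤ 216 := key

lemma hadamard3 (u0 u1 u2 v0 v1 v2 w0 w1 w2 : ℝ) :
    (u0*(v1*w2 - v2*w1) - u1*(v0*w2 - v2*w0) + u2*(v0*w1 - v1*w0))^2 ≤
      (u0^2+u1^2+u2^2) * (v0^2+v1^2+v2^2) * (w0^2+w1^2+w2^2) := by
  set c0 := v1*w2 - v2*w1 with hc0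
  set c1 := -(v0*w2 - v2*w0) with hc1
  set c2 := v0*w1 - v1*w0 with hc2
  have h1 : (u0*c0 + u1*c1 + u2*c2)^2 ≤ (u0^2+u1^2+u2^2) * (c0^2+c1^2+c2^2) := by
    nlinarith [sq_nonneg (u0*c1 - u1*c0), sq_nonneg (u0*c2 - u2*c0), sq_nonneg (u1*c2 - u2*c1)]
  have h2 : c0^2+c1^2+c2^2 ≤ (v0^2+v1^2+v2^2) * (w0^2+w1^2+w2^2) := by
    rw [hc0, hc1, hc2]
    nlinarith [sq_nonneg (v0*w0 + v1*w1 + v2*w2)]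
  have h3 : (u0^2+u1^2+u2^2) * (c0^2+c1^2+c2^2) ≤
      (u0^2+u1^2+u2^2) * ((v0^2+v1^2+v2^2) * (w0^2+w1^2+w2^2)) :=
    mul_le_mul_of_nonneg_left h2 (by positivity)
  calc (u0*(v1*w2 - v2*w1) - u1*(v0*w2 - v2*w0) + u2*(v0*w1 - v1*w0))^2
      = (u0*c0 + u1*c1 + u2*c2)^2 := by rw [hc0, hc1, hc2]; ring
    _ ≤ (u0^2+u1^2+u2^2) * (c0^2+c1^2+c2^2) := h1
    _ ≤ (u0^2+u1^2+u2^2) * ((v0^2+v1^2+v2^2) * (w0^2+w1^2+w2^2)) := h3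
    _ = (u0^2+u1^2+u2^2) * (v0^2+v1^2+v2^2) * (w0^2+w1^2+w2^2) := by ring

lemma amgm3 {x y z : ℝ} (hx : 0 ≤ x) (hy : 0 ≤ y) (hz : 0 ≤ z) : x*y*z*27 ≤ (x+y+z)^3 := by
  nlinarith [sq_nonneg (x-y), sq_nonneg (y-z), sq_nonneg (x-z), mul_nonneg hx hy,
    mul_nonneg hy hz, mul_nonneg hx hz, sq_nonneg (x+y+z)]

lemma sq_le_of_le_abs {a b : ℝ} (h : a ≤ |b|) (ha : 0 ≤ a) : a^2 ≤ b^2 := by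
  nlinarith [sq_abs b, abs_nonneg b]

lemma core_ineq (x01 x02 x03 x12 x13 x23 D V M1 M2 M3 s : ℝ)
    (h01 : 0 ≤ x01) (h02 : 0 ≤ x02) (h03 : 0 ≤ x03)
    (h12 : 0 ≤ x12) (h13 : 0 ≤ x13) (h23 : 0 ≤ x23)
    (hV : 0 ≤ V)
    (hM1 : 0 ≤ M1) (hM2 : 0 ≤ M2) (hM3 : 0 ≤ M3)
    (hQ : M1 + M2 + M3 = (x01^2+x02^2+x03^2+x12^2+x13^2+x23^2)/4)
    (hd1 : D^2 ≤ x01^2 * x23^2 * M1)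
    (hd2 : D^2 ≤ x02^2 * x13^2 * M2)
    (hd3 : D^2 ≤ x03^2 * x12^2 * M3)
    (hV6 : 6*V ≤ |D|)
    (ht1 : x01 + x23 ≤ x02 + x13 + x03 + x12)
    (ht2 : x02 + x13 ≤ x01 + x23 + x03 + x12)
    (ht3 : x03 + x12 ≤ x01 + x23 + x02 + x13)
    (hs : x01 + x23 + x02 + x13 + x03 + x12 = s) :
    1296 * Real.sqrt 2 * V ≤ s^3 := by
  have hsix := six_homog h01 h23 h02 h13 h03 h12 ht1 ht2 ht3
  rw [hs] at hsix
  obtain ⟨Qv, hQv⟩ : ∃ t, x01^2+x23^2+x02^2+x13^2+x03^2+x12^2 = t := ⟨_, rfl⟩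
  obtain ⟨P2, hP2⟩ : ∃ t, (x01*x23*x02*x13*x03*x12)^2 = t := ⟨_, rfl⟩
  rw [hQv, hP2] at hsix
  -- hsix : P2 * Qv^3 * 6^15 ≤ s^18
  have hP2nn : 0 ≤ P2 := by rw [← hP2]; positivity
  have hQM : M1 + M2 + M3 = Qv/4 := by rw [← hQv]; linarith
  have hspos : 0 ≤ s := by rw [← hs]; positivity
  have hA : 0 ≤ 1296 * Real.sqrt 2 * V := by positivity
  apply (pow_le_pow_iff_left₀ hA (by positivity) (show (6:ℕ) ≠ 0 by norm_num)).1
  have hD2 : (6*V)^2 ≤ D^2 := sq_le_of_le_abs hV6 (by positivity)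
  have hG1 : (6*V)^6 ≤ (D^2)^3 := by
    calc (6*V)^6 = ((6*V)^2)^3 := by ring
      _ ≤ (D^2)^3 := pow_le_pow_left₀ (by positivity) hD2 3
  have hG2 : (D^2)^3 ≤ P2 * (M1*(M2*M3)) := by
    calc (D^2)^3 = D^2 * D^2 * D^2 := by ring
      _ ≤ (x01^2*x23^2*M1) * (x02^2*x13^2*M2) * (x03^2*x12^2*M3) := by
          apply mul_le_mul (mul_le_mul hd1 hd2 (sq_nonneg D) (by positivity)) hd3
            (sq_nonneg D) (by positivity)
      _ = (x01*x23*x02*x13*x03*x12)^2 * (M1*(M2*M3)) := by ring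
      _ = P2 * (M1*(M2*M3)) := by rw [hP2]
  have hMMM : M1*(M2*M3) ≤ Qv^3/1728 := by
    have h27 := amgm3 hM1 hM2 hM3
    rw [hQM] at h27
    nlinarith [h27]
  have hG3 : P2 * (M1*(M2*M3)) ≤ P2 * (Qv^3/1728) :=
    mul_le_mul_of_nonneg_left hMMM hP2nn
  have hfinal : (6*V)^6 ≤ s^18/(6^15*1728) := by
    have c1 := (hG1.trans hG2).trans hG3
    linarith [hsix, c1]
  have hsq2 : (Real.sqrt 2)^2 = 2 := Real.sq_sqrt (by norm_num)
  have h8 : (Real.sqrt 2)^6 = 8 := by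
    calc (Real.sqrt 2)^6 = ((Real.sqrt 2)^2)^3 := by ring
      _ = 8 := by rw [hsq2]; norm_num
  calc (1296 * Real.sqrt 2 * V)^6 = (Real.sqrt 2)^6 * (1296^6 * V^6) := by ring
    _ = 8 * (1296^6 * V^6) := by rw [h8]
    _ = 6^18 * 8 * (6*V)^6 := by
        have h1296 : (1296:ℝ)^6 = 6^24 := by norm_num
        linear_combination 8 * V^6 * h1296
    _ ≤ 6^18 * 8 * (s^18 / (6^15*1728)) := by
        apply mul_le_mul_of_nonneg_left hfinal (by norm_num)
    _ = (s^3)^6 := by ring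

def ordSet (σ : Equiv.Perm (Fin 3)) : Set P3 :=
  {x | 0 ≤ x (σ 0) ∧ x (σ 0) < x (σ 1) ∧ x (σ 1) < x (σ 2) ∧ x (σ 2) ≤ 1}

lemma permMap_apply (σ : Equiv.Perm (Fin 3)) (x : P3) (i : Fin 3) :
    Matrix.toLin' (σ.permMatrix ℝ) x i = x (σ i) := by
  simp only [Matrix.toLin'_apply, Matrix.mulVec, dotProduct, Equiv.Perm.permMatrix,
    Matrix.one_apply, Equiv.toPEquiv_apply, PEquiv.toMatrix_apply, Fin.sum_univ_three,
    Option.mem_def, Option.some.injEq]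
  rcases (by omega : σ i = 0 ∨ σ i = 1 ∨ σ i = 2) with h|h|h <;> rw [h] <;>
    norm_num <;> simp [Fin.ext_iff] <;> norm_num
lemma mem_ordSet (σ : Equiv.Perm (Fin 3)) (x : P3) :
    x ∈ ordSet σ ↔ 0 ≤ x (σ 0) ∧ x (σ 0) < x (σ 1) ∧ x (σ 1) < x (σ 2) ∧ x (σ 2) ≤ 1 :=
  Iff.rfl

lemma vol_ordSet_eq (σ : Equiv.Perm (Fin 3)) : volume (ordSet σ) = volume (ordSet 1) := by
  have himg : ordSet σ = (Matrix.toLin' ((σ⁻¹).permMatrix ℝ)) '' (ordSet 1) := by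
    ext x
    constructor
    · intro hx
      refine ⟨Matrix.toLin' (σ.permMatrix ℝ) x, ?_, ?_⟩
      · rw [mem_ordSet]
        rw [permMap_apply, permMap_apply, permMap_apply]
        simpa [mem_ordSet] using hx
      · funext i
        rw [permMap_apply, permMap_apply]
        simp
    · rintro ⟨y, hy, rfl⟩
      rw [mem_ordSet] at hy ⊢
      rw [permMap_apply, permMap_apply, permMap_apply]
      simpa using hy
  rw [himg, MeasureTheory.Measure.addHaar_image_linearMap]
  have hdet : |LinearMap.det (Matrix.toLin' ((σ⁻¹).permMatrix ℝ))| = 1 := by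
    rw [LinearMap.det_toLin', Matrix.det_permutation]
    rcases Int.units_eq_one_or (Equiv.Perm.sign σ⁻¹) with h | h <;> rw [h] <;> norm_num
  rw [hdet]; simp

lemma measurable_ordSet (σ : Equiv.Perm (Fin 3)) : MeasurableSet (ordSet σ) := by
  apply MeasurableSet.inter
  · exact measurableSet_le measurable_const (measurable_pi_apply _)
  apply MeasurableSet.inter
  · exact measurableSet_lt (measurable_pi_apply _) (measurable_pi_apply _)
  apply MeasurableSet.inter
  · exact measurableSet_lt (measurable_pi_apply _) (measurable_pi_apply _)
  · exact measurableSet_le (measurable_pi_apply _) measurable_const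

lemma fin3_cases (j : Fin 3) : j = 0 ∨ j = 1 ∨ j = 2 := by omega

lemma ordSet_disjoint {σ τ : Equiv.Perm (Fin 3)} (h : σ ≠ τ) :
    Disjoint (ordSet σ) (ordSet τ) := by
  rw [Set.disjoint_left]
  rintro x ⟨a0, a1, a2, a3⟩ ⟨b0, b1, b2, b3⟩
  have hminσ : ∀ k : Fin 3, x (σ 0) ≤ x (σ k) := by
    intro k; rcases fin3_cases k with h|h|h <;> subst h <;> first
      | exact le_refl _ | linarith
  have hminτ : ∀ k : Fin 3, x (τ 0) ≤ x (τ k) := by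
    intro k; rcases fin3_cases k with h|h|h <;> subst h <;> first
      | exact le_refl _ | linarith
  have hmaxσ : ∀ k : Fin 3, x (σ k) ≤ x (σ 2) := by
    intro k; rcases fin3_cases k with h|h|h <;> subst h <;> first
      | exact le_refl _ | linarith
  have hmaxτ : ∀ k : Fin 3, x (τ k) ≤ x (τ 2) := by
    intro k; rcases fin3_cases k with h|h|h <;> subst h <;> first
      | exact le_refl _ | linarith
  have e0 : x (σ 0) = x (τ 0) := by
    have h1' := hminσ (σ.symm (τ 0)); have h2' := hminτ (τ.symm (σ 0))
    rw [σ.apply_symm_apply] at h1'; rw [τ.apply_symm_apply] at h2'; linarith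
  have e2 : x (σ 2) = x (τ 2) := by
    have h1' := hmaxσ (σ.symm (τ 2)); have h2' := hmaxτ (τ.symm (σ 2))
    rw [σ.apply_symm_apply] at h1'; rw [τ.apply_symm_apply] at h2'; linarith
  have hsum : x (σ 0) + x (σ 1) + x (σ 2) = x (τ 0) + x (τ 1) + x (τ 2) := by
    have h1' := Equiv.sum_comp σ x
    have h2' := Equiv.sum_comp τ x
    rw [Fin.sum_univ_three] at h1' h2'
    linarith [h1'.trans h2'.symm]
  have e1 : x (σ 1) = x (τ 1) := by linarith
  have hinj : ∀ i j : Fin 3, x (σ i) = x (σ j) → i = j := by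
    intro i j hij
    rcases fin3_cases i with hi|hi|hi <;> rcases fin3_cases j with hj|hj|hj <;>
      subst hi <;> subst hj <;> first | rfl | (exfalso; linarith)
  have hperm : σ = τ := by
    apply Equiv.ext; intro k
    rcases fin3_cases k with h|h|h <;> subst h
    · have := hinj 0 (σ.symm (τ 0)) (by rw [σ.apply_symm_apply]; exact e0)
      rw [← σ.apply_symm_apply (τ 0), ← this]
    · have := hinj 1 (σ.symm (τ 1)) (by rw [σ.apply_symm_apply]; exact e1)
      rw [← σ.apply_symm_apply (τ 1), ← this]
    · have := hinj 2 (σ.symm (τ 2)) (by rw [σ.apply_symm_apply]; exact e2)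
      rw [← σ.apply_symm_apply (τ 2), ← this]
  exact h hperm

lemma vol_ordSet_le : volume (ordSet 1) ≤ 1/6 := by
  have hsum : ∑ σ : Equiv.Perm (Fin 3), volume (ordSet σ) ≤ 1 := by
    rw [← measure_biUnion_finset
      (fun σ _ τ _ hστ => (ordSet_disjoint hστ))
      (fun σ _ => measurable_ordSet σ)]
    calc volume (⋃ σ ∈ Finset.univ, ordSet σ)
        ≤ volume (Set.univ.pi fun _ : Fin 3 => Set.Icc (0:ℝ) 1) := by
          apply measure_mono
          intro x hx
          simp only [Set.mem_iUnion] at hx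
          obtain ⟨σ, _, h0, h1, h2, h3⟩ := hx
          intro k _
          have hk : σ (σ.symm k) = k := σ.apply_symm_apply k
          rcases fin3_cases (σ.symm k) with h|h|h <;>
            rw [h] at hk <;> rw [← hk] <;> constructor <;> linarith
      _ = 1 := by rw [volume_pi_pi]; simp [Real.volume_Icc]
  rw [Finset.sum_congr rfl (fun σ _ => vol_ordSet_eq σ), Finset.sum_const] at hsum
  have hcard : (Finset.univ : Finset (Equiv.Perm (Fin 3))).card = 6 := by decide
  rw [hcard] at hsum
  rw [ENNReal.le_div_iff_mul_le (by norm_num) (by norm_num)]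
  calc volume (ordSet 1) * 6 = 6 • volume (ordSet 1) := by
        rw [nsmul_eq_mul]; ring
    _ ≤ 1 := hsum

lemma vol_hyperplane (i j : Fin 3) (h : i ≠ j) : volume {x : P3 | x i = x j} = 0 := by
  have : {x : P3 | x i = x j} =
      (LinearMap.ker ((LinearMap.proj i : P3 →ₗ[ℝ] ℝ) - LinearMap.proj j) : Submodule ℝ P3) := by
    ext x; simp [LinearMap.mem_ker, sub_eq_zero]
  rw [this]
  apply MeasureTheory.Measure.addHaar_submodule
  intro htop
  have h1 : (Pi.single i 1 : P3) ∈ LinearMap.ker ((LinearMap.proj i : P3 →ₗ[ℝ] ℝ) - LinearMap.proj j) := by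
    rw [htop]; trivial
  simp [LinearMap.mem_ker, Pi.single_eq_same, Pi.single_eq_of_ne h.symm] at h1

def cornerK : Set P3 := {x | 0 ≤ x 0 ∧ 0 ≤ x 1 ∧ 0 ≤ x 2 ∧ x 0 + x 1 + x 2 ≤ 1}

lemma vol_cornerK_le : volume cornerK ≤ 1/6 := by
  set L : P3 →ₗ[ℝ] P3 := Matrix.toLin' !![(1:ℝ),0,0; 1,1,0; 1,1,1] with hL
  have happ : ∀ (x : P3), (L x 0 = x 0) ∧ (L x 1 = x 0 + x 1) ∧ (L x 2 = x 0 + x 1 + x 2) := by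
    intro x
    refine ⟨?_, ?_, ?_⟩ <;>
      simp [hL, Matrix.toLin'_apply, Matrix.mulVec, dotProduct, Fin.sum_univ_three] <;> ring
  have hdet : |LinearMap.det L| = 1 := by
    rw [hL, LinearMap.det_toLin', Matrix.det_fin_three]
    simp
  have himg : L '' cornerK ⊆
      {x : P3 | 0 ≤ x 0 ∧ x 0 < x 1 ∧ x 1 < x 2 ∧ x 2 ≤ 1} ∪ {x : P3 | x 0 = x 1} ∪ {x : P3 | x 1 = x 2} := by
    rintro y ⟨x, ⟨h0, h1, h2, h3⟩, rfl⟩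
    obtain ⟨e0, e1, e2⟩ := happ x
    rcases eq_or_lt_of_le h1 with hq | hq
    · left; right; simp only [Set.mem_setOf_eq]; rw [e0, e1]; linarith
    rcases eq_or_lt_of_le h2 with hq2 | hq2
    · right; simp only [Set.mem_setOf_eq]; rw [e1, e2]; linarith
    left; left
    refine ⟨by rw [e0]; exact h0, by rw [e0, e1]; linarith, by rw [e1, e2]; linarith, by rw [e2]; linarith⟩
  have hvol : volume cornerK = volume (L '' cornerK) := by
    rw [MeasureTheory.Measure.addHaar_image_linearMap, hdet]; simp
  rw [hvol]
  calc volume (L '' cornerK) ≤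
      volume ({x : P3 | 0 ≤ x 0 ∧ x 0 < x 1 ∧ x 1 < x 2 ∧ x 2 ≤ 1} ∪ {x : P3 | x 0 = x 1} ∪ {x : P3 | x 1 = x 2}) :=
        measure_mono himg
    _ ≤ volume ({x : P3 | 0 ≤ x 0 ∧ x 0 < x 1 ∧ x 1 < x 2 ∧ x 2 ≤ 1} ∪ {x : P3 | x 0 = x 1}) +
        volume {x : P3 | x 1 = x 2} := measure_union_le _ _
    _ ≤ volume {x : P3 | 0 ≤ x 0 ∧ x 0 < x 1 ∧ x 1 < x 2 ∧ x 2 ≤ 1} +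
        volume {x : P3 | x 0 = x 1} + volume {x : P3 | x 1 = x 2} := by
          gcongr; exact measure_union_le _ _
    _ ≤ 1/6 := by
        rw [vol_hyperplane 0 1 (by decide), vol_hyperplane 1 2 (by decide)]
        have hbridge : {x : P3 | 0 ≤ x 0 ∧ x 0 < x 1 ∧ x 1 < x 2 ∧ x 2 ≤ 1} = ordSet 1 := by
          ext x; simp [ordSet]
        rw [hbridge]
        simpa using vol_ordSet_le

lemma convex_cornerK : Convex ℝ cornerK := by
  rintro x ⟨hx0, hx1, hx2, hx3⟩ y ⟨hy0, hy1, hy2, hy3⟩ a b ha hb hab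
  refine ⟨?_, ?_, ?_, ?_⟩ <;> simp only [Pi.add_apply, Pi.smul_apply, smul_eq_mul] <;> nlinarith

lemma volume_tetra_le (q : Fin 4 → P3) :
    volume (convexHull ℝ {q 0, q 1, q 2, q 3}) ≤
      ENNReal.ofReal |Matrix.det (Matrix.of fun j i => q i.succ j - q 0 j)| / 6 := by
  set M : Matrix (Fin 3) (Fin 3) ℝ := Matrix.of fun j i => q i.succ j - q 0 j with hM
  set L : P3 →ₗ[ℝ] P3 := Matrix.toLin' M with hL
  have hcol : ∀ i : Fin 3, L (Pi.single i 1) = q i.succ - q 0 := by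
    intro i
    funext j
    simp [hL, Matrix.toLin'_apply, Matrix.mulVec_single, hM]
  have himg : L '' {(0 : P3), Pi.single 0 1, Pi.single 1 1, Pi.single 2 1} =
      {0, q 1 - q 0, q 2 - q 0, q 3 - q 0} := by
    rw [Set.image_insert_eq, Set.image_insert_eq, Set.image_insert_eq, Set.image_singleton,
      map_zero, hcol 0, hcol 1, hcol 2]
    have e1 : (Fin.succ 0 : Fin 4) = 1 := rfl
    have e2 : (Fin.succ 1 : Fin 4) = 2 := rfl
    have e3 : (Fin.succ 2 : Fin 4) = 3 := rfl
    rw [e1, e2, e3]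
  have hhull : convexHull ℝ {q 0, q 1, q 2, q 3} =
      q 0 +ᵥ (L '' convexHull ℝ {(0 : P3), Pi.single 0 1, Pi.single 1 1, Pi.single 2 1}) := by
    rw [L.image_convexHull, himg, ← convexHull_vadd]
    congr 1
    rw [Set.vadd_set_insert, Set.vadd_set_insert, Set.vadd_set_insert, Set.vadd_set_singleton]
    have h1 : q 0 +ᵥ ((0:P3)) = q 0 := by simp [vadd_eq_add]
    have h2 : ∀ i : Fin 4, q 0 +ᵥ (q i - q 0) = q i := by intro i; simp [vadd_eq_add]
    rw [h1, h2, h2, h2]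
  rw [hhull, measure_vadd, MeasureTheory.Measure.addHaar_image_linearMap]
  have hdet : LinearMap.det L = M.det := by rw [hL, LinearMap.det_toLin']
  rw [hdet]
  have hsub : convexHull ℝ {(0 : P3), Pi.single 0 1, Pi.single 1 1, Pi.single 2 1} ⊆ cornerK := by
    apply convexHull_min _ convex_cornerK
    rintro x (rfl | rfl | rfl | rfl) <;>
      refine ⟨?_, ?_, ?_, ?_⟩ <;> norm_num [Pi.single_apply, Fin.ext_iff]
  calc ENNReal.ofReal |M.det| * volume (convexHull ℝ {(0 : P3), Pi.single 0 1, Pi.single 1 1, Pi.single 2 1})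
      ≤ ENNReal.ofReal |M.det| * (1/6) := by
        gcongr
        exact le_trans (measure_mono hsub) vol_cornerK_le
    _ = ENNReal.ofReal |M.det| / 6 := by
        rw [mul_one_div]

/-- The regular tetrahedron minimizes the Melzak ratio among tetrahedra:
for any four points in Euclidean 3-space, the cube of the total edge length
of the tetrahedron they span is at least `1296 √2` times its volume. -/
theorem melzak_tetrahedron (p : Fin 4 → EuclideanSpace ℝ (Fin 3)) :
    (‖p 0 - p 1‖ + ‖p 0 - p 2‖ + ‖p 0 - p 3‖ +
     ‖p 1 - p 2‖ + ‖p 1 - p 3‖ + ‖p 2 - p 3‖) ^ 3 ≥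
    1296 * Real.sqrt 2 *
      (MeasureTheory.volume
        (convexHull ℝ ({p 0, p 1, p 2, p 3} : Set (EuclideanSpace ℝ (Fin 3))))).toReal := by
  classical
  -- triangle inequality helper
  have tri : ∀ i k j : Fin 4, ‖p i - p j‖ ≤ ‖p i - p k‖ + ‖p k - p j‖ := by
    intro i k j
    have h := dist_triangle (p i) (p k) (p j)
    simpa [dist_eq_norm] using h
  have nrev : ∀ i j : Fin 4, ‖p i - p j‖ = ‖p j - p i‖ := fun i j => norm_sub_rev _ _
  -- transfer volume to pi space
  set φ := (MeasurableEquiv.toLp 2 (Fin 3 → ℝ)).symm with hφ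
  set q : Fin 4 → P3 := fun i => φ (p i) with hq
  have hullmeas : MeasurableSet (convexHull ℝ ({p 0, p 1, p 2, p 3} : Set (EuclideanSpace ℝ (Fin 3)))) := by
    exact ((Set.toFinite _).isCompact_convexHull ℝ).isClosed.measurableSet
  have hvoltrans : volume (convexHull ℝ ({p 0, p 1, p 2, p 3} : Set (EuclideanSpace ℝ (Fin 3)))) =
      volume (convexHull ℝ ({q 0, q 1, q 2, q 3} : Set P3)) := by
    have himg : ⇑φ '' (convexHull ℝ ({p 0, p 1, p 2, p 3} : Set (EuclideanSpace ℝ (Fin 3)))) =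
        convexHull ℝ ({q 0, q 1, q 2, q 3} : Set P3) := by
      have h1 := (WithLp.linearEquiv 2 ℝ (Fin 3 → ℝ)).toLinearMap.image_convexHull
        ({p 0, p 1, p 2, p 3} : Set (EuclideanSpace ℝ (Fin 3)))
      have h2 : ⇑φ '' ({p 0, p 1, p 2, p 3} : Set (EuclideanSpace ℝ (Fin 3))) =
          ({q 0, q 1, q 2, q 3} : Set P3) := by
        rw [Set.image_insert_eq, Set.image_insert_eq, Set.image_insert_eq, Set.image_singleton]
      rw [← h2]
      exact h1
    rw [← himg, MeasurableEquiv.image_eq_preimage_symm]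
    exact (((EuclideanSpace.volume_preserving_symm_measurableEquiv_toLp (Fin 3)).symm φ).measure_preimage
      hullmeas.nullMeasurableSet).symm
  rw [hvoltrans]
  set V := (volume (convexHull ℝ ({q 0, q 1, q 2, q 3} : Set P3))).toReal with hV
  set D := Matrix.det (Matrix.of fun j i => q i.succ j - q 0 j) with hD
  have hVle : V ≤ |D| / 6 := by
    apply ENNReal.toReal_le_of_le_ofReal (by positivity)
    have h := volume_tetra_le q
    rw [ENNReal.ofReal_div_of_pos (by norm_num : (0:ℝ) < 6)]
    have h6 : ENNReal.ofReal (6:ℝ) = 6 := by norm_num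
    rw [h6]
    exact h
  have hVpos : 0 ≤ V := ENNReal.toReal_nonneg
  have hV6 : 6 * V ≤ |D| := by linarith
  -- coordinates
  have hqp : ∀ i k, q i k = p i k := fun i k => rfl
  have hn : ∀ i j : Fin 4, ‖p i - p j‖^2 =
      (p i 0 - p j 0)^2 + (p i 1 - p j 1)^2 + (p i 2 - p j 2)^2 := by
    intro i j
    rw [EuclideanSpace.norm_eq, Real.sq_sqrt (by positivity), Fin.sum_univ_three]
    simp [Real.norm_eq_abs, sq_abs]
  have hDpoly : D =
      (p 1 0 - p 0 0)*((p 2 1 - p 0 1)*(p 3 2 - p 0 2)) - (p 1 0 - p 0 0)*((p 3 1 - p 0 1)*(p 2 2 - p 0 2))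
      - (p 2 0 - p 0 0)*((p 1 1 - p 0 1)*(p 3 2 - p 0 2)) + (p 2 0 - p 0 0)*((p 3 1 - p 0 1)*(p 1 2 - p 0 2))
      + (p 3 0 - p 0 0)*((p 1 1 - p 0 1)*(p 2 2 - p 0 2)) - (p 3 0 - p 0 0)*((p 2 1 - p 0 1)*(p 1 2 - p 0 2)) := by
    rw [hD, Matrix.det_fin_three]
    simp only [Matrix.of_apply]
    have s0 : (Fin.succ 0 : Fin 4) = 1 := rfl
    have s1 : (Fin.succ 1 : Fin 4) = 2 := rfl
    have s2 : (Fin.succ 2 : Fin 4) = 3 := rfl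
    rw [s0, s1, s2]
    simp only [hqp]
    ring
  -- midline quantities
  set M1 := ((p 2 0 + p 3 0)/2 - (p 0 0 + p 1 0)/2)^2 + ((p 2 1 + p 3 1)/2 - (p 0 1 + p 1 1)/2)^2
      + ((p 2 2 + p 3 2)/2 - (p 0 2 + p 1 2)/2)^2 with hM1d
  set M2 := ((p 1 0 + p 3 0)/2 - (p 0 0 + p 2 0)/2)^2 + ((p 1 1 + p 3 1)/2 - (p 0 1 + p 2 1)/2)^2
      + ((p 1 2 + p 3 2)/2 - (p 0 2 + p 2 2)/2)^2 with hM2d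
  set M3 := ((p 1 0 + p 2 0)/2 - (p 0 0 + p 3 0)/2)^2 + ((p 1 1 + p 2 1)/2 - (p 0 1 + p 3 1)/2)^2
      + ((p 1 2 + p 2 2)/2 - (p 0 2 + p 3 2)/2)^2 with hM3d
  have hd1 : D^2 ≤ ‖p 0 - p 1‖^2 * ‖p 2 - p 3‖^2 * M1 := by
    have hh := hadamard3 (p 1 0 - p 0 0) (p 1 1 - p 0 1) (p 1 2 - p 0 2)
      ((p 2 0 + p 3 0)/2 - (p 0 0 + p 1 0)/2) ((p 2 1 + p 3 1)/2 - (p 0 1 + p 1 1)/2)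
      ((p 2 2 + p 3 2)/2 - (p 0 2 + p 1 2)/2)
      (p 3 0 - p 2 0) (p 3 1 - p 2 1) (p 3 2 - p 2 2)
    calc D^2 = (((p 1 0 - p 0 0))*((((p 2 1 + p 3 1)/2 - (p 0 1 + p 1 1)/2))*((p 3 2 - p 2 2)) - (((p 2 2 + p 3 2)/2 - (p 0 2 + p 1 2)/2))*((p 3 1 - p 2 1))) - ((p 1 1 - p 0 1))*((((p 2 0 + p 3 0)/2 - (p 0 0 + p 1 0)/2))*((p 3 2 - p 2 2)) - (((p 2 2 + p 3 2)/2 - (p 0 2 + p 1 2)/2))*((p 3 0 - p 2 0))) + ((p 1 2 - p 0 2))*((((p 2 0 + p 3 0)/2 - (p 0 0 + p 1 0)/2))*((p 3 1 - p 2 1)) - (((p 2 1 + p 3 1)/2 - (p 0 1 + p 1 1)/2))*((p 3 0 - p 2 0))))^2 := by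
          rw [hDpoly]; ring
      _ ≤ ((p 1 0 - p 0 0)^2+(p 1 1 - p 0 1)^2+(p 1 2 - p 0 2)^2) *
          (((p 2 0 + p 3 0)/2 - (p 0 0 + p 1 0)/2)^2+((p 2 1 + p 3 1)/2 - (p 0 1 + p 1 1)/2)^2+((p 2 2 + p 3 2)/2 - (p 0 2 + p 1 2)/2)^2) *
          ((p 3 0 - p 2 0)^2+(p 3 1 - p 2 1)^2+(p 3 2 - p 2 2)^2) := hh
      _ = ‖p 0 - p 1‖^2 * ‖p 2 - p 3‖^2 * M1 := by
          rw [hn 0 1, hn 2 3, hM1d]; ring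
  have hd2 : D^2 ≤ ‖p 0 - p 2‖^2 * ‖p 1 - p 3‖^2 * M2 := by
    have hh := hadamard3 (p 2 0 - p 0 0) (p 2 1 - p 0 1) (p 2 2 - p 0 2)
      ((p 1 0 + p 3 0)/2 - (p 0 0 + p 2 0)/2) ((p 1 1 + p 3 1)/2 - (p 0 1 + p 2 1)/2)
      ((p 1 2 + p 3 2)/2 - (p 0 2 + p 2 2)/2)
      (p 3 0 - p 1 0) (p 3 1 - p 1 1) (p 3 2 - p 1 2)
    calc D^2 = (((p 2 0 - p 0 0))*((((p 1 1 + p 3 1)/2 - (p 0 1 + p 2 1)/2))*((p 3 2 - p 1 2)) - (((p 1 2 + p 3 2)/2 - (p 0 2 + p 2 2)/2))*((p 3 1 - p 1 1))) - ((p 2 1 - p 0 1))*((((p 1 0 + p 3 0)/2 - (p 0 0 + p 2 0)/2))*((p 3 2 - p 1 2)) - (((p 1 2 + p 3 2)/2 - (p 0 2 + p 2 2)/2))*((p 3 0 - p 1 0))) + ((p 2 2 - p 0 2))*((((p 1 0 + p 3 0)/2 - (p 0 0 + p 2 0)/2))*((p 3 1 - p 1 1)) - (((p 1 1 + p 3 1)/2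 - (p 0 1 + p 2 1)/2))*((p 3 0 - p 1 0))))^2 := by
          rw [hDpoly]; ring
      _ ≤ _ := hh
      _ = ‖p 0 - p 2‖^2 * ‖p 1 - p 3‖^2 * M2 := by
          rw [hn 0 2, hn 1 3, hM2d]; ring
  have hd3 : D^2 ≤ ‖p 0 - p 3‖^2 * ‖p 1 - p 2‖^2 * M3 := by
    have hh := hadamard3 (p 3 0 - p 0 0) (p 3 1 - p 0 1) (p 3 2 - p 0 2)
      ((p 1 0 + p 2 0)/2 - (p 0 0 + p 3 0)/2) ((p 1 1 + p 2 1)/2 - (p 0 1 + p 3 1)/2)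
      ((p 1 2 + p 2 2)/2 - (p 0 2 + p 3 2)/2)
      (p 2 0 - p 1 0) (p 2 1 - p 1 1) (p 2 2 - p 1 2)
    calc D^2 = (((p 3 0 - p 0 0))*((((p 1 1 + p 2 1)/2 - (p 0 1 + p 3 1)/2))*((p 2 2 - p 1 2)) - (((p 1 2 + p 2 2)/2 - (p 0 2 + p 3 2)/2))*((p 2 1 - p 1 1))) - ((p 3 1 - p 0 1))*((((p 1 0 + p 2 0)/2 - (p 0 0 + p 3 0)/2))*((p 2 2 - p 1 2)) - (((p 1 2 + p 2 2)/2 - (p 0 2 + p 3 2)/2))*((p 2 0 - p 1 0))) + ((p 3 2 - p 0 2))*((((p 1 0 + p 2 0)/2 - (p 0 0 + p 3 0)/2))*((p 2 1 - p 1 1)) - (((p 1 1 + p 2 1)/2 - (p 0 1 + p 3 1)/2))*((p 2 0 - p 1 0))))^2 := by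
          rw [hDpoly]; ring
      _ ≤ _ := hh
      _ = ‖p 0 - p 3‖^2 * ‖p 1 - p 2‖^2 * M3 := by
          rw [hn 0 3, hn 1 2, hM3d]; ring
  have hQ : M1 + M2 + M3 = (‖p 0 - p 1‖^2 + ‖p 0 - p 2‖^2 + ‖p 0 - p 3‖^2
      + ‖p 1 - p 2‖^2 + ‖p 1 - p 3‖^2 + ‖p 2 - p 3‖^2)/4 := by
    rw [hn 0 1, hn 0 2, hn 0 3, hn 1 2, hn 1 3, hn 2 3, hM1d, hM2d, hM3d]; ring
  -- triangle pair bounds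
  have ht1 : ‖p 0 - p 1‖ + ‖p 2 - p 3‖ ≤ ‖p 0 - p 2‖ + ‖p 1 - p 3‖ + ‖p 0 - p 3‖ + ‖p 1 - p 2‖ := by
    have a1 := tri 0 2 1; have a2 := tri 0 3 1; have a3 := tri 2 0 3; have a4 := tri 2 1 3
    have r1 := nrev 2 1; have r2 := nrev 3 1; have r3 := nrev 2 0; have r4 := nrev 2 1
    linarith
  have ht2 : ‖p 0 - p 2‖ + ‖p 1 - p 3‖ ≤ ‖p 0 - p 1‖ + ‖p 2 - p 3‖ + ‖p 0 - p 3‖ + ‖p 1 - p 2‖ := by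
    have a1 := tri 0 1 2; have a2 := tri 0 3 2; have a3 := tri 1 0 3; have a4 := tri 1 2 3
    have r1 := nrev 1 0; have r2 := nrev 3 2; have r3 := nrev 1 2; linarith
  have ht3 : ‖p 0 - p 3‖ + ‖p 1 - p 2‖ ≤ ‖p 0 - p 1‖ + ‖p 2 - p 3‖ + ‖p 0 - p 2‖ + ‖p 1 - p 3‖ := by
    have a1 := tri 0 1 3; have a2 := tri 0 2 3; have a3 := tri 1 0 2; have a4 := tri 1 3 2
    have r1 := nrev 1 0; have r2 := nrev 3 2; have r3 := nrev 1 3; linarith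
  have final := core_ineq (‖p 0 - p 1‖) (‖p 0 - p 2‖) (‖p 0 - p 3‖) (‖p 1 - p 2‖) (‖p 1 - p 3‖)
    (‖p 2 - p 3‖) D V M1 M2 M3
    (‖p 0 - p 1‖ + ‖p 0 - p 2‖ + ‖p 0 - p 3‖ + ‖p 1 - p 2‖ + ‖p 1 - p 3‖ + ‖p 2 - p 3‖)
    (norm_nonneg _) (norm_nonneg _) (norm_nonneg _) (norm_nonneg _) (norm_nonneg _) (norm_nonneg _)
    hVpos (by rw [hM1d]; positivity) (by rw [hM2d]; positivity) (by rw [hM3d]; positivity)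
    hQ hd1 hd2 hd3 hV6 ht1 ht2 ht3 (by ring)
  linarith

end
end

section
/- Let B > 0, let α ∈ (0, π), and let w₁, w₂, w₃ > 0 satisfy w₁·w₂·w₃ ≥ 2, w₃ ≤ 2·w₂·tan(α/2), and w₁ + w₂ ≤ B. Then B³·tan(α/2) ≥ 27/4; consequently α ≥ 2·arctan(27/(4B³)). -/
/-- Algebraic core of the dihedral angle bound: if `w₁w₂w₃ ≥ 2`,
`w₃ ≤ 2w₂·tan(α/2)` and `w₁ + w₂ ≤ B`, then `B³·tan(α/2) ≥ 27/4` and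
consequently `α ≥ 2·arctan(27/(4B³))`. -/
theorem melzak_dihedral_bound (B α w₁ w₂ w₃ : ℝ) (hB : 0 < B)
    (hα₀ : 0 < α) (hαπ : α < Real.pi)
    (hw₁ : 0 < w₁) (hw₂ : 0 < w₂) (hw₃ : 0 < w₃)
    (hvol : w₁ * w₂ * w₃ ≥ 2)
    (hwedge : w₃ ≤ 2 * w₂ * Real.tan (α / 2))
    (hedge : w₁ + w₂ ≤ B) :
    B ^ 3 * Real.tan (α / 2) ≥ 27 / 4 ∧ α ≥ 2 * Real.arctan (27 / (4 * B ^ 3)) := by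
  have hhalf : α / 2 ∈ Set.Ioo (-(Real.pi / 2)) (Real.pi / 2) := by
    constructor <;> nlinarith [Real.pi_pos]
  have ht : 0 < Real.tan (α / 2) := Real.tan_pos_of_pos_of_lt_pi_div_two (by linarith) hhalf.2
  -- w₁ w₂² tan(α/2) ≥ 1
  have h1 : w₁ * w₂ ^ 2 * Real.tan (α / 2) ≥ 1 := by nlinarith [mul_pos hw₁ hw₂]
  -- AM-GM: 27 w₁ w₂² ≤ 4 (w₁+w₂)³ ≤ 4 B³
  have hB' : (w₁ + w₂) ^ 3 ≤ B ^ 3 := pow_le_pow_left₀ (by positivity) hedge 3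
  have h2 : 27 * (w₁ * w₂ ^ 2) ≤ 4 * B ^ 3 := by
    nlinarith [mul_nonneg (mul_nonneg hw₁.le (by positivity : (0:ℝ) ≤ 4)) (sq_nonneg (w₂ - 2 * w₁)), mul_nonneg hw₂.le (sq_nonneg (w₂ - 2 * w₁))]
  have hmain : B ^ 3 * Real.tan (α / 2) ≥ 27 / 4 := by
    nlinarith [mul_pos hw₁ (mul_pos hw₂ hw₂)]
  refine ⟨hmain, ?_⟩
  have hB3 : 0 < 4 * B ^ 3 := by positivity
  have htan : 27 / (4 * B ^ 3) ≤ Real.tan (α / 2) := by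
    rw [div_le_iff₀ hB3]; nlinarith
  have := Real.arctan_strictMono.monotone htan
  rw [Real.arctan_tan hhalf.1 hhalf.2] at this
  linarith
end

section
/- Let B > 0, d ≥ 0, let α ∈ (0, π), and let w₁, w₂, w₃ > 0 and w₂′ ≥ 0 satisfy w₁·w₂·w₃ ≥ 1, w₃ ≤ 2·(w₂ + w₂′)·tan(α/2), w₂′ ≤ d/(2·tan(α/2)), and w₁ + w₂ ≤ B. Then (4/27)·B³·tan(α/2) ≥ 1/2 − (1/4)·d·B². In particular, if d·B² < 2 then tan(α/2) ≥ 27·(2 − d·B²)/(16·B³), a positive lower bound depending only on B and d. -/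
/-- Algebraic core of the generalized dihedral angle bound: if `w₁w₂w₃ ≥ 1`,
`w₃ ≤ 2(w₂ + w₂')·tan(α/2)`, `w₂' ≤ d/(2·tan(α/2))` and `w₁ + w₂ ≤ B`, then
`(4/27)·B³·tan(α/2) ≥ 1/2 − (1/4)·d·B²`; in particular if `d·B² < 2` then
`tan(α/2) ≥ 27(2 − dB²)/(16B³)`. -/
theorem melzak_generalized_dihedral_bound (B d α w₁ w₂ w₃ w₂' : ℝ)
    (hB : 0 < B) (hd : 0 ≤ d)
    (hα₀ : 0 < α) (hαπ : α < Real.pi)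
    (hw₁ : 0 < w₁) (hw₂ : 0 < w₂) (hw₃ : 0 < w₃) (hw₂' : 0 ≤ w₂')
    (hvol : w₁ * w₂ * w₃ ≥ 1)
    (hwedge : w₃ ≤ 2 * (w₂ + w₂') * Real.tan (α / 2))
    (hdist : w₂' ≤ d / (2 * Real.tan (α / 2)))
    (hedge : w₁ + w₂ ≤ B) :
    4 / 27 * B ^ 3 * Real.tan (α / 2) ≥ 1 / 2 - 1 / 4 * d * B ^ 2 ∧
    (d * B ^ 2 < 2 → Real.tan (α / 2) ≥ 27 * (2 - d * B ^ 2) / (16 * B ^ 3)) := by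
  set t := Real.tan (α / 2) with ht_def
  have ht : 0 < t := Real.tan_pos_of_pos_of_lt_pi_div_two (by linarith) (by linarith)
  -- from hdist: 2 * t * w₂' ≤ d
  have hdist' : 2 * t * w₂' ≤ d := by
    have h := (le_div_iff₀ (by positivity : (0:ℝ) < 2 * t)).mp hdist
    nlinarith [h]
  -- AM-GM facts
  have hag1 : w₁ * w₂ ^ 2 ≤ 4 / 27 * B ^ 3 := by
    nlinarith [sq_nonneg (2 * w₁ - w₂), sq_nonneg (w₁ + w₂ - B), mul_pos hw₁ hw₂,
      sq_nonneg (w₁ - w₂), mul_nonneg (mul_nonneg hw₁.le hw₂.le) (sub_nonneg.mpr hedge)]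
  have hag2 : w₁ * w₂ ≤ B ^ 2 / 4 := by nlinarith [sq_nonneg (w₁ - w₂)]
  -- chain
  have hkey : 1 ≤ 2 * t * (w₁ * w₂ ^ 2) + d * (w₁ * w₂) := by
    have h1 : w₁ * w₂ * w₃ ≤ w₁ * w₂ * (2 * (w₂ + w₂') * t) :=
      mul_le_mul_of_nonneg_left hwedge (by positivity)
    nlinarith [mul_le_mul_of_nonneg_right hdist' (mul_nonneg hw₁.le hw₂.le)]
  have hmain : 4 / 27 * B ^ 3 * t ≥ 1 / 2 - 1 / 4 * d * B ^ 2 := by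
    nlinarith [mul_le_mul_of_nonneg_right hag1 (by positivity : (0:ℝ) ≤ 2 * t),
      mul_le_mul_of_nonneg_right hag2 hd]
  refine ⟨hmain, fun hdB => ?_⟩
  rw [ge_iff_le, div_le_iff₀ (by positivity)]
  nlinarith [hmain]
end

section
/- Let γ₁, …, γ₆ be six real numbers, each in the interval [0, π/2]. If cos γ₁ + cos γ₂ + ⋯ + cos γ₆ < 3, then γ₁ + γ₂ + ⋯ + γ₆ > 3π/2. Equivalently, if γ₁ + ⋯ + γ₆ ≤ 3π/2 then cos γ₁ + ⋯ + cos γ₆ ≥ 3. -/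
lemma cos_ge_chord {x : ℝ} (h0 : 0 ≤ x) (h1 : x ≤ Real.pi / 2) :
    Real.cos x ≥ 1 - 2 / Real.pi * x := by
  have hπ := Real.pi_pos
  have hcc : ConcaveOn ℝ (Set.Icc (-(Real.pi/2)) (Real.pi/2)) Real.cos :=
    StrictConcaveOn.concaveOn strictConcaveOn_cos_Icc
  have hmem0 : (0:ℝ) ∈ Set.Icc (-(Real.pi/2)) (Real.pi/2) := by
    constructor <;> nlinarith
  have hmem1 : Real.pi/2 ∈ Set.Icc (-(Real.pi/2)) (Real.pi/2) := by
    constructor <;> nlinarith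
  have ha : (0:ℝ) ≤ 1 - 2 / Real.pi * x := by
    have h2 : 2 / Real.pi * x ≤ 2 / Real.pi * (Real.pi/2) :=
      mul_le_mul_of_nonneg_left h1 (by positivity)
    have : 2 / Real.pi * (Real.pi/2) = 1 := by field_simp
    linarith
  have hb : (0:ℝ) ≤ 2 / Real.pi * x := by positivity
  have hab : (1 - 2 / Real.pi * x) + 2 / Real.pi * x = 1 := by ring
  have := hcc.2 hmem0 hmem1 ha hb hab
  simp only [smul_eq_mul, mul_zero, zero_add, Real.cos_zero, mul_one,
    Real.cos_pi_div_two] at this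
  have hx : 2 / Real.pi * x * (Real.pi/2) = x := by
    field_simp
  rw [hx] at this
  linarith

open Finset in
/-- Angle-deficit step for an exposed triangular face: if six angles
`γ i ∈ [0, π/2]` satisfy `∑ cos (γ i) < 3`, then `∑ γ i > 3π/2`. -/
theorem melzak_triangle_angle_deficit (γ : Fin 6 → ℝ)
    (hγ : ∀ i, γ i ∈ Set.Icc 0 (Real.pi / 2))
    (hcos : ∑ i, Real.cos (γ i) < 3) :
    ∑ i, γ i > 3 * Real.pi / 2 := by
  have hπ := Real.pi_pos
  have key : ∑ i, Real.cos (γ i) ≥ ∑ i, (1 - 2 / Real.pi * γ i) :=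
    Finset.sum_le_sum fun i _ => cos_ge_chord (hγ i).1 (hγ i).2
  have hsum : ∑ i : Fin 6, (1 - 2 / Real.pi * γ i)
      = 6 - 2 / Real.pi * ∑ i, γ i := by
    rw [Finset.sum_sub_distrib, ← Finset.mul_sum]
    simp
  rw [hsum] at key
  have h3 : 2 / Real.pi * ∑ i, γ i > 3 := by linarith
  rw [gt_iff_lt, div_mul_eq_mul_div, lt_div_iff₀ hπ] at h3
  nlinarith
end

section
/- Fix c ∈ (0, 1). The function x ↦ cos x / √(1 − c²·sin² x) is strictly decreasing on [0, π/2]: for all 0 ≤ x < y ≤ π/2, cos y / √(1 − c²·sin² y) < cos x / √(1 − c²·sin² x). Consequently, for θ ∈ (0, π/2) and 0 ≤ α < β with β − α ≤ π and α ≤ π, the difference cos(θ)·cos((β−α)/2)/(2·√(1 − cos²θ·sin²((β−α)/2))) − cos(θ)·cos(α/2)/(2·√(1 − cos²θ·sin²(α/2))) is negative whenever α < β/2. -/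
open Real

lemma melzak_key (c : ℝ) (hc₀ : 0 < c) (hc₁ : c < 1) :
    ∀ x y : ℝ, 0 ≤ x → x < y → y ≤ Real.pi / 2 →
      Real.cos y / Real.sqrt (1 - c ^ 2 * Real.sin y ^ 2) <
        Real.cos x / Real.sqrt (1 - c ^ 2 * Real.sin x ^ 2) := by
  intro x y hx hxy hy
  have hpi : 0 < Real.pi := Real.pi_pos
  have hDx : 0 < 1 - c ^ 2 * Real.sin x ^ 2 := by
    nlinarith [Real.sin_sq_le_one x, sq_nonneg (Real.sin x)]
  have hDy : 0 < 1 - c ^ 2 * Real.sin y ^ 2 := by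
    nlinarith [Real.sin_sq_le_one y, sq_nonneg (Real.sin y)]
  have hsx : 0 < Real.sqrt (1 - c ^ 2 * Real.sin x ^ 2) := Real.sqrt_pos.2 hDx
  have hsy : 0 < Real.sqrt (1 - c ^ 2 * Real.sin y ^ 2) := Real.sqrt_pos.2 hDy
  rw [div_lt_div_iff₀ hsy hsx]
  have hcx : 0 < Real.cos x := Real.cos_pos_of_mem_Ioo
    ⟨by linarith, by linarith⟩
  have hcy : 0 ≤ Real.cos y := Real.cos_nonneg_of_mem_Icc
    ⟨by linarith, hy⟩
  have hsin : Real.sin x < Real.sin y :=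
    Real.strictMonoOn_sin ⟨by linarith, by linarith⟩ ⟨by linarith, hy⟩ hxy
  have hsinx : 0 ≤ Real.sin x := Real.sin_nonneg_of_nonneg_of_le_pi hx (by linarith)
  -- key algebraic inequality on squares
  have hsq : Real.cos y ^ 2 * (1 - c ^ 2 * Real.sin x ^ 2) <
      Real.cos x ^ 2 * (1 - c ^ 2 * Real.sin y ^ 2) := by
    have h1 := Real.sin_sq_add_cos_sq x
    have h2 := Real.sin_sq_add_cos_sq y
    have hprod : 0 < (1 - c ^ 2) *
        ((Real.sin y - Real.sin x) * (Real.sin y + Real.sin x)) := by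
      apply mul_pos (by nlinarith) (mul_pos (by linarith) (by linarith))
    nlinarith [hprod]
  have e1 : (Real.cos y * Real.sqrt (1 - c ^ 2 * Real.sin x ^ 2)) ^ 2
      = Real.cos y ^ 2 * (1 - c ^ 2 * Real.sin x ^ 2) := by
    rw [mul_pow, Real.sq_sqrt hDx.le]
  have e2 : (Real.cos x * Real.sqrt (1 - c ^ 2 * Real.sin y ^ 2)) ^ 2
      = Real.cos x ^ 2 * (1 - c ^ 2 * Real.sin y ^ 2) := by
    rw [mul_pow, Real.sq_sqrt hDy.le]
  have hA : 0 ≤ Real.cos y * Real.sqrt (1 - c ^ 2 * Real.sin x ^ 2) :=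
    mul_nonneg hcy hsx.le
  have hB : 0 < Real.cos x * Real.sqrt (1 - c ^ 2 * Real.sin y ^ 2) :=
    mul_pos hcx hsy
  nlinarith [hsq, e1, e2, hA, hB]

/-- For fixed `c ∈ (0,1)`, the function `x ↦ cos x / √(1 − c²·sin² x)` is strictly
decreasing on `[0, π/2]`; consequently the derivative of the spherical area expression,
`cos θ·cos((β−α)/2)/(2√(1 − cos²θ·sin²((β−α)/2))) − cos θ·cos(α/2)/(2√(1 − cos²θ·sin²(α/2)))`,
is negative whenever `α < β/2` (with `θ ∈ (0, π/2)`, `0 ≤ α < β`, `β − α ≤ π`, `α ≤ π`). -/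
theorem melzak_bigon_derivative (c : ℝ) (hc₀ : 0 < c) (hc₁ : c < 1) :
    (∀ x y : ℝ, 0 ≤ x → x < y → y ≤ Real.pi / 2 →
      Real.cos y / Real.sqrt (1 - c ^ 2 * Real.sin y ^ 2) <
        Real.cos x / Real.sqrt (1 - c ^ 2 * Real.sin x ^ 2)) ∧
    (∀ θ α β : ℝ, 0 < θ → θ < Real.pi / 2 → 0 ≤ α → α < β → β - α ≤ Real.pi →
      α ≤ Real.pi → α < β / 2 →
      Real.cos θ * Real.cos ((β - α) / 2) /
          (2 * Real.sqrt (1 - Real.cos θ ^ 2 * Real.sin ((β - α) / 2) ^ 2)) -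
        Real.cos θ * Real.cos (α / 2) /
          (2 * Real.sqrt (1 - Real.cos θ ^ 2 * Real.sin (α / 2) ^ 2)) < 0) := by
  refine ⟨melzak_key c hc₀ hc₁, ?_⟩
  intro θ α β hθ₀ hθ hα₀ hαβ hβα hαπ hhalf
  have hcθ₀ : 0 < Real.cos θ := Real.cos_pos_of_mem_Ioo ⟨by linarith [Real.pi_pos], hθ⟩
  have hcθ₁ : Real.cos θ < 1 := by
    have := Real.cos_lt_cos_of_nonneg_of_le_pi le_rfl (by linarith [Real.pi_pos]) hθ₀
    simpa using this
  have key := melzak_key (Real.cos θ) hcθ₀ hcθ₁ (α / 2) ((β - α) / 2)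
    (by linarith) (by linarith) (by linarith)
  have hsx : 0 < Real.sqrt (1 - Real.cos θ ^ 2 * Real.sin (α / 2) ^ 2) := by
    apply Real.sqrt_pos.2
    nlinarith [Real.sin_sq_le_one (α / 2), sq_nonneg (Real.sin (α / 2))]
  have hsy : 0 < Real.sqrt (1 - Real.cos θ ^ 2 * Real.sin ((β - α) / 2) ^ 2) := by
    apply Real.sqrt_pos.2
    nlinarith [Real.sin_sq_le_one ((β - α) / 2), sq_nonneg (Real.sin ((β - α) / 2))]
  rw [sub_neg]
  rw [div_lt_div_iff₀ (by positivity) (by positivity)]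
  rw [div_lt_div_iff₀ hsy hsx] at key
  nlinarith [key, hcθ₀, hsx, hsy]
end
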